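/- Let x_b ∈ I, let M ≥ 1 be an integer, let λ_0, λ_1 ∈ ℂ, and let c_0, c_1 : ℝ → ℂ be continuous on a neighborhood of 0. Assume that, as h → 0: c_1(h)·𝔈_1(h) − λ_1 = O(h^M) and c_0(h) − h·λ_0 + c_1(h)·𝔈_0(h) = O(h^{M+1}). Then for every infinitely differentiable u : I → ℂ satisfying (a u')' + k u = 0 at every x ∈ I with x ≥ x_b, one has, as h → 0⁺: c_0(h)·u(x_b) + c_1(h)·u(x_b + h) − h·(λ_0·u(x_b) + λ_1·u'(x_b)) = O(h^{M+1}); equivalently, the one-sided two-point boundary stencil h^{−1}[c_0(h)u(x_b) + c_1(h)u(x_b+h)] approximates the boundary functional B u := λ_0 u(x_b) + λ_1 u'(x_b) to order M for every solution of the homogeneous equation. -/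

import Mathlib

open Filter Topology Asymptotics

/-- `Ecoef a k n = (E_{n+2,0}, E_{n+2,1})` from the recursion of the paper. -/
noncomputable def Ecoef (a : ℝ → ℝ) (k : ℝ → ℂ) : ℕ → (ℝ → ℂ) × (ℝ → ℂ)
  | 0 => (fun x => -k x / (a x : ℂ), fun x => -((deriv a x : ℝ) : ℂ) / (a x : ℂ))
  | n + 1 =>
      (fun x => deriv (Ecoef a k n).1 x - k x / (a x : ℂ) * (Ecoef a k n).2 x,
       fun x => (Ecoef a k n).1 x + deriv (Ecoef a k n).2 x
          - ((deriv a x : ℝ) : ℂ) / (a x : ℂ) * (Ecoef a k n).2 x)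

/-- `E_{j,0}` for `j ≥ 2` (junk value for `j < 2`). -/
noncomputable def Ej0 (a : ℝ → ℝ) (k : ℝ → ℂ) (j : ℕ) : ℝ → ℂ := (Ecoef a k (j - 2)).1

/-- `E_{j,1}` for `j ≥ 2` (junk value for `j < 2`). -/
noncomputable def Ej1 (a : ℝ → ℝ) (k : ℝ → ℂ) (j : ℕ) : ℝ → ℂ := (Ecoef a k (j - 2)).2

/-- `Fcoef a k n m = F_{n+2, m-1}` (second index shifted by one: `m = ℓ + 1`, `ℓ ≥ -1`). -/
noncomputable def Fcoef (a : ℝ → ℝ) (k : ℝ → ℂ) : ℕ → ℕ → ℝ → ℂ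
  | 0, 0 => fun x => (Ecoef a k 0).2 x / (a x : ℂ)
  | 0, 1 => fun x => 1 / (a x : ℂ)
  | 0, _ + 2 => fun _ => 0
  | n + 1, 0 => fun x => (Ecoef a k (n + 1)).2 x / (a x : ℂ)
  | n + 1, m + 1 => fun x => deriv (Fcoef a k n (m + 1)) x + Fcoef a k n m x

/-- `F_{j,ℓ}` for `j ≥ 2`, `ℓ ≥ 0` (junk value for `j < 2`). -/
noncomputable def Fjl (a : ℝ → ℝ) (k : ℝ → ℂ) (j ℓ : ℕ) : ℝ → ℂ := Fcoef a k (j - 2) (ℓ + 1)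

/-- `𝔈₀(h) = 1 + ∑_{j=2}^{B} E_{j,0}(x_b) h^j / j!`. -/
noncomputable def EPoly0 (a : ℝ → ℝ) (k : ℝ → ℂ) (xb : ℝ) (B : ℕ) (h : ℝ) : ℂ :=
  1 + ∑ j ∈ Finset.Icc 2 B, Ej0 a k j xb * (h : ℂ) ^ j / (Nat.factorial j : ℂ)

/-- `𝔈₁(h) = 1 + ∑_{j=2}^{B} E_{j,1}(x_b) h^(j-1) / j!`. -/
noncomputable def EPoly1 (a : ℝ → ℝ) (k : ℝ → ℂ) (xb : ℝ) (B : ℕ) (h : ℝ) : ℂ :=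
  1 + ∑ j ∈ Finset.Icc 2 B, Ej1 a k j xb * (h : ℂ) ^ (j - 1) / (Nat.factorial j : ℂ)

/-- `𝔉_ℓ(h) = ∑_{j=ℓ+2}^{B} F_{j,ℓ}(x_b) h^(j-ℓ-2) / j!`. -/
noncomputable def FPoly (a : ℝ → ℝ) (k : ℝ → ℂ) (xb : ℝ) (ℓ B : ℕ) (h : ℝ) : ℂ :=
  ∑ j ∈ Finset.Icc (ℓ + 2) B, Fjl a k j ℓ xb * (h : ℂ) ^ (j - ℓ - 2) / (Nat.factorial j : ℂ)


section aux
variable {p q : ℝ} {a : ℝ → ℝ} {k : ℝ → ℂ} {u : ℝ → ℂ} {xb : ℝ}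

lemma ane (hapos : ∀ x ∈ Set.Ioo p q, 0 < a x) {x : ℝ} (hx : x ∈ Set.Ioo p q) :
    (a x : ℂ) ≠ 0 :=
  Complex.ofReal_ne_zero.2 (ne_of_gt (hapos x hx))

lemma ecoef_smooth (ha : ContDiffOn ℝ (⊤ : ℕ∞) a (Set.Ioo p q))
    (hk : ContDiffOn ℝ (⊤ : ℕ∞) k (Set.Ioo p q))
    (hapos : ∀ x ∈ Set.Ioo p q, 0 < a x) (n : ℕ) :
    ContDiffOn ℝ (⊤ : ℕ∞) (Ecoef a k n).1 (Set.Ioo p q) ∧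
      ContDiffOn ℝ (⊤ : ℕ∞) (Ecoef a k n).2 (Set.Ioo p q) := by
  have hA : ContDiffOn ℝ (⊤ : ℕ∞) (fun x => (a x : ℂ)) (Set.Ioo p q) :=
    Complex.ofRealCLM.contDiff.comp_contDiffOn ha
  have hA' : ContDiffOn ℝ (⊤ : ℕ∞) (fun x => ((deriv a x : ℝ) : ℂ)) (Set.Ioo p q) :=
    Complex.ofRealCLM.contDiff.comp_contDiffOn (ha.deriv_of_isOpen isOpen_Ioo (by simp))
  have hne : ∀ x ∈ Set.Ioo p q, (a x : ℂ) ≠ 0 := fun x hx => ane hapos hx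
  induction n with
  | zero =>
      constructor
      · simp only [Ecoef, neg_div, div_eq_mul_inv, neg_mul]
        exact ((hk.mul (hA.inv hne))).neg
      · simp only [Ecoef, neg_div, div_eq_mul_inv, neg_mul]
        exact ((hA'.mul (hA.inv hne))).neg
  | succ n ih =>
      obtain ⟨h1, h2⟩ := ih
      constructor
      · simp only [Ecoef, div_eq_mul_inv]
        exact (h1.deriv_of_isOpen isOpen_Ioo (by simp)).sub
          (((hk.mul (hA.inv hne))).mul h2)
      · simp only [Ecoef, div_eq_mul_inv]
        exact (h1.add (h2.deriv_of_isOpen isOpen_Ioo (by simp))).sub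
          (((hA'.mul (hA.inv hne))).mul h2)

lemma contDiffOn_iteratedDeriv {f : ℝ → ℂ} {s : Set ℝ} (hs : IsOpen s)
    (hf : ContDiffOn ℝ (⊤ : ℕ∞) f s) (m : ℕ) :
    ContDiffOn ℝ (⊤ : ℕ∞) (iteratedDeriv m f) s := by
  induction m with
  | zero => simpa [iteratedDeriv_zero] using hf
  | succ m ih => rw [iteratedDeriv_succ]; exact ih.deriv_of_isOpen hs (by simp)

lemma deriv2_eq (ha : ContDiffOn ℝ (⊤ : ℕ∞) a (Set.Ioo p q))
    (hapos : ∀ x ∈ Set.Ioo p q, 0 < a x)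
    (hu : ContDiffOn ℝ (⊤ : ℕ∞) u (Set.Ioo p q))
    (hODE : ∀ x ∈ Set.Ioo p q, xb ≤ x →
      deriv (fun y => (a y : ℂ) * deriv u y) x + k x * u x = 0)
    {x : ℝ} (hx : x ∈ Set.Ioo p q) (hxx : xb ≤ x) :
    deriv (deriv u) x = (Ecoef a k 0).1 x * u x + (Ecoef a k 0).2 x * deriv u x := by
  have hax : DifferentiableAt ℝ a x :=
    (ha.contDiffAt (isOpen_Ioo.mem_nhds hx)).differentiableAt (by simp)
  have h1 : HasDerivAt (fun y => (a y : ℂ)) ((deriv a x : ℝ) : ℂ) x :=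
    hax.hasDerivAt.ofReal_comp
  have hdu : ContDiffOn ℝ (⊤ : ℕ∞) (deriv u) (Set.Ioo p q) :=
    hu.deriv_of_isOpen isOpen_Ioo (by simp)
  have h2 : HasDerivAt (deriv u) (deriv (deriv u) x) x :=
    ((hdu.contDiffAt (isOpen_Ioo.mem_nhds hx)).differentiableAt (by simp)).hasDerivAt
  have h4 := hODE x hx hxx
  rw [(h1.fun_mul h2).deriv] at h4
  have hane := ane hapos hx
  simp only [Ecoef]
  rw [div_mul_eq_mul_div, div_mul_eq_mul_div, ← add_div, eq_div_iff hane]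
  linear_combination h4

lemma iter_eq (ha : ContDiffOn ℝ (⊤ : ℕ∞) a (Set.Ioo p q))
    (hk : ContDiffOn ℝ (⊤ : ℕ∞) k (Set.Ioo p q))
    (hapos : ∀ x ∈ Set.Ioo p q, 0 < a x) (hxb : xb ∈ Set.Ioo p q)
    (hu : ContDiffOn ℝ (⊤ : ℕ∞) u (Set.Ioo p q))
    (hODE : ∀ x ∈ Set.Ioo p q, xb ≤ x →
      deriv (fun y => (a y : ℂ) * deriv u y) x + k x * u x = 0)
    (n : ℕ) :
    ∀ x ∈ Set.Ioo xb q, iteratedDeriv (n + 2) u x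
      = (Ecoef a k n).1 x * u x + (Ecoef a k n).2 x * deriv u x := by
  have hsub : Set.Ioo xb q ⊆ Set.Ioo p q := Set.Ioo_subset_Ioo hxb.1.le le_rfl
  induction n with
  | zero =>
      intro x hx
      rw [show (0:ℕ) + 2 = 2 from rfl, iteratedDeriv_succ, iteratedDeriv_one]
      exact deriv2_eq ha hapos hu hODE (hsub hx) hx.1.le
  | succ n ih =>
      intro x hx
      have hx' : x ∈ Set.Ioo p q := hsub hx
      have hmem := isOpen_Ioo.mem_nhds hx'
      have hdiff : ∀ {f : ℝ → ℂ}, ContDiffOn ℝ (⊤ : ℕ∞) f (Set.Ioo p q) →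
          DifferentiableAt ℝ f x := fun hf =>
        (hf.contDiffAt hmem).differentiableAt (by simp)
      obtain ⟨hE1, hE2⟩ := ecoef_smooth ha hk hapos n
      have hdu : ContDiffOn ℝ (⊤ : ℕ∞) (deriv u) (Set.Ioo p q) :=
        hu.deriv_of_isOpen isOpen_Ioo (by simp)
      have heq : iteratedDeriv (n + 2) u
          =ᶠ[𝓝 x] fun y => (Ecoef a k n).1 y * u y + (Ecoef a k n).2 y * deriv u y :=
        eventually_of_mem (isOpen_Ioo.mem_nhds hx) ih
      rw [iteratedDeriv_succ, heq.deriv_eq]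
      rw [deriv_fun_add ((hdiff hE1).fun_mul (hdiff hu)) ((hdiff hE2).fun_mul (hdiff hdu)),
        deriv_fun_mul (hdiff hE1) (hdiff hu), deriv_fun_mul (hdiff hE2) (hdiff hdu),
        deriv2_eq ha hapos hu hODE hx' hx.1.le]
      have hane := ane hapos hx'
      simp only [Ecoef]
      field_simp
      ring
end aux

section aux2
variable {p q : ℝ} {a : ℝ → ℝ} {k : ℝ → ℂ} {u : ℝ → ℂ} {xb : ℝ}

lemma iter_eq_xb (ha : ContDiffOn ℝ (⊤ : ℕ∞) a (Set.Ioo p q))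
    (hk : ContDiffOn ℝ (⊤ : ℕ∞) k (Set.Ioo p q))
    (hapos : ∀ x ∈ Set.Ioo p q, 0 < a x) (hxb : xb ∈ Set.Ioo p q)
    (hu : ContDiffOn ℝ (⊤ : ℕ∞) u (Set.Ioo p q))
    (hODE : ∀ x ∈ Set.Ioo p q, xb ≤ x →
      deriv (fun y => (a y : ℂ) * deriv u y) x + k x * u x = 0)
    (n : ℕ) :
    iteratedDeriv (n + 2) u xb
      = (Ecoef a k n).1 xb * u xb + (Ecoef a k n).2 xb * deriv u xb := by
  obtain ⟨hE1, hE2⟩ := ecoef_smooth ha hk hapos n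
  have hdu : ContDiffOn ℝ (⊤ : ℕ∞) (deriv u) (Set.Ioo p q) :=
    hu.deriv_of_isOpen isOpen_Ioo (by simp)
  have hmem := isOpen_Ioo.mem_nhds hxb
  have hcont : ∀ {f : ℝ → ℂ}, ContDiffOn ℝ (⊤ : ℕ∞) f (Set.Ioo p q) → ContinuousAt f xb :=
    fun hf => (hf.contDiffAt hmem).continuousAt
  have hL : Filter.Tendsto (iteratedDeriv (n + 2) u) (nhdsWithin xb (Set.Ioi xb))
      (nhds (iteratedDeriv (n + 2) u xb)) :=
    (hcont (contDiffOn_iteratedDeriv isOpen_Ioo hu (n + 2))).tendsto.mono_left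
      nhdsWithin_le_nhds
  have hR : Filter.Tendsto
      (fun y => (Ecoef a k n).1 y * u y + (Ecoef a k n).2 y * deriv u y)
      (nhdsWithin xb (Set.Ioi xb))
      (nhds ((Ecoef a k n).1 xb * u xb + (Ecoef a k n).2 xb * deriv u xb)) :=
    ((((hcont hE1).mul (hcont hu)).add ((hcont hE2).mul (hcont hdu))).tendsto).mono_left
      nhdsWithin_le_nhds
  have heq : iteratedDeriv (n + 2) u
      =ᶠ[nhdsWithin xb (Set.Ioi xb)]
        fun y => (Ecoef a k n).1 y * u y + (Ecoef a k n).2 y * deriv u y :=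
    eventually_of_mem (Ioo_mem_nhdsGT_of_mem ⟨le_rfl, hxb.2⟩)
      (iter_eq ha hk hapos hxb hu hODE n)
  exact tendsto_nhds_unique (hL.congr' heq) hR

lemma iterWithin_eq {b : ℝ} (hu : ContDiffOn ℝ (⊤ : ℕ∞) u (Set.Ioo p q))
    (hsub : Set.Icc xb b ⊆ Set.Ioo p q) (hlt : xb < b) (j : ℕ) :
    iteratedDerivWithin j u (Set.Icc xb b) xb = iteratedDeriv j u xb := by
  have H := (hu.ftaylorSeriesWithin isOpen_Ioo.uniqueDiffOn).mono hsub
  have e1 := H.eq_iteratedFDerivWithin_of_uniqueDiffOn (m := j) (by exact_mod_cast le_top)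
    (uniqueDiffOn_Icc hlt) (Set.left_mem_Icc.2 hlt.le)
  have e2 : ftaylorSeriesWithin ℝ u (Set.Ioo p q) xb j = iteratedFDeriv ℝ j u xb := by
    rw [ftaylorSeriesWithin]
    exact iteratedFDerivWithin_of_isOpen j isOpen_Ioo (hsub (Set.left_mem_Icc.2 hlt.le))
  rw [iteratedDerivWithin_eq_iteratedFDerivWithin, iteratedDeriv_eq_iteratedFDeriv, ← e1, e2]
end aux2



section taylor
variable {p q : ℝ} {a : ℝ → ℝ} {k : ℝ → ℂ} {u : ℝ → ℂ} {xb : ℝ}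

lemma taylor_sum_eq (ha : ContDiffOn ℝ (⊤ : ℕ∞) a (Set.Ioo p q))
    (hk : ContDiffOn ℝ (⊤ : ℕ∞) k (Set.Ioo p q))
    (hapos : ∀ x ∈ Set.Ioo p q, 0 < a x) (hxb : xb ∈ Set.Ioo p q)
    (hu : ContDiffOn ℝ (⊤ : ℕ∞) u (Set.Ioo p q))
    (hODE : ∀ x ∈ Set.Ioo p q, xb ≤ x →
      deriv (fun y => (a y : ℂ) * deriv u y) x + k x * u x = 0)
    (M : ℕ) (h : ℝ) :
    (∑ j ∈ Finset.range (M + 2), (((j.factorial : ℝ))⁻¹ * h ^ j) • iteratedDeriv j u xb)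
      = u xb * EPoly0 a k xb (M + 1) h
        + deriv u xb * ((h : ℂ) * EPoly1 a k xb (M + 1) h) := by
  have key : ∀ j ∈ Finset.Icc 2 (M + 1),
      (((j.factorial : ℝ))⁻¹ * h ^ j) • iteratedDeriv j u xb
        = u xb * (Ej0 a k j xb * (h : ℂ) ^ j / (j.factorial : ℂ))
          + deriv u xb *
            ((h : ℂ) * (Ej1 a k j xb * (h : ℂ) ^ (j - 1) / (j.factorial : ℂ))) := by
    intro j hj
    have hj2 : 2 ≤ j := (Finset.mem_Icc.1 hj).1
    obtain ⟨n, rfl⟩ : ∃ n, j = n + 2 := ⟨j - 2, by omega⟩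
    rw [iter_eq_xb ha hk hapos hxb hu hODE n]
    have e0 : Ej0 a k (n + 2) = (Ecoef a k n).1 := rfl
    have e1 : Ej1 a k (n + 2) = (Ecoef a k n).2 := rfl
    have e2 : (n + 2 - 1 : ℕ) = n + 1 := rfl
    rw [e0, e1, e2, Complex.real_smul]
    have hfac : ((n + 2).factorial : ℂ) ≠ 0 := Nat.cast_ne_zero.2 (Nat.factorial_ne_zero _)
    push_cast
    field_simp
    ring
  rw [Finset.range_eq_Ico, ← Finset.sum_Ico_consecutive _ (show (0:ℕ) ≤ 2 by norm_num)
      (show (2:ℕ) ≤ M + 2 by omega),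
    show Finset.Ico 2 (M + 2) = Finset.Icc 2 (M + 1) by exact Finset.Ico_add_one_right_eq_Icc 2 (M + 1)]
  rw [Finset.sum_congr rfl key, Finset.sum_add_distrib]
  simp only [← Finset.mul_sum]
  rw [show Finset.Ico (0:ℕ) 2 = {0, 1} by decide, Finset.sum_insert (by decide),
    Finset.sum_singleton]
  simp only [EPoly0, EPoly1, pow_zero, pow_one, Nat.factorial_zero, Nat.factorial_one,
    iteratedDeriv_zero, iteratedDeriv_one, Nat.cast_one, inv_one, one_mul, one_smul,
    Complex.real_smul]
  push_cast
  ring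
end taylor

/-- Theorem 3.3, dispersion/boundary part.  Under the conditions (3.18)
on the boundary stencil coefficients `c₀, c₁`, the one-sided two-point stencil approximates
the boundary functional `B u = λ₀ u(x_b) + λ₁ u'(x_b)` to order `M` (in the `h`-scaled form,
`O(h^{M+1})` as `h → 0⁺`) for every smooth solution of the homogeneous equation on the right
side of `x_b`. -/
theorem boundary_stencil_dispersion_order
    (p q : ℝ) (a : ℝ → ℝ) (k : ℝ → ℂ)
    (ha : ContDiffOn ℝ (⊤ : ℕ∞) a (Set.Ioo p q))
    (hk : ContDiffOn ℝ (⊤ : ℕ∞) k (Set.Ioo p q))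
    (hapos : ∀ x ∈ Set.Ioo p q, 0 < a x)
    (xb : ℝ) (hxb : xb ∈ Set.Ioo p q) (M : ℕ) (hM : 1 ≤ M)
    (lam0 lam1 : ℂ) (c0 c1 : ℝ → ℂ)
    (hc0cont : ∃ U ∈ 𝓝 (0 : ℝ), ContinuousOn c0 U)
    (hc1cont : ∃ U ∈ 𝓝 (0 : ℝ), ContinuousOn c1 U)
    (hc1 : (fun h : ℝ => c1 h * EPoly1 a k xb (M + 1) h - lam1)
      =O[𝓝 (0 : ℝ)] fun h : ℝ => h ^ M)
    (hc0 : (fun h : ℝ => c0 h - (h : ℂ) * lam0 + c1 h * EPoly0 a k xb M h)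
      =O[𝓝 (0 : ℝ)] fun h : ℝ => h ^ (M + 1)) :
    ∀ u : ℝ → ℂ, ContDiffOn ℝ (⊤ : ℕ∞) u (Set.Ioo p q) →
      (∀ x ∈ Set.Ioo p q, xb ≤ x →
        deriv (fun y => (a y : ℂ) * deriv u y) x + k x * u x = 0) →
      (fun h : ℝ => c0 h * u xb + c1 h * u (xb + h)
          - (h : ℂ) * (lam0 * u xb + lam1 * deriv u xb))
        =O[𝓝[>] (0 : ℝ)] fun h : ℝ => h ^ (M + 1) := by
  intro u hu hODE
  obtain ⟨hpxb, hxbq⟩ := hxb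
  set b := (xb + q) / 2 with hb
  have hxbb : xb < b := by rw [hb]; linarith
  have hbq : b < q := by rw [hb]; linarith
  have hsub : Set.Icc xb b ⊆ Set.Ioo p q := fun x hx =>
    ⟨lt_of_lt_of_le hpxb hx.1, lt_of_le_of_lt hx.2 hbq⟩
  have hu2 : ContDiffOn ℝ ((M + 1 : ℕ) + 1) u (Set.Icc xb b) :=
    (hu.mono hsub).of_le (by exact_mod_cast le_top)
  obtain ⟨C, hC⟩ := exists_taylor_mean_remainder_bound hxbb.le hu2
  set T : ℝ → ℂ := fun h => u xb * EPoly0 a k xb (M + 1) h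
      + deriv u xb * ((h : ℂ) * EPoly1 a k xb (M + 1) h) with hT
  have hrem : ∀ h ∈ Set.Ioo (0:ℝ) (b - xb), ‖u (xb + h) - T h‖ ≤ C * h ^ (M + 2) := by
    intro h hh
    have hmem : xb + h ∈ Set.Icc xb b := ⟨by linarith [hh.1], by linarith [hh.2]⟩
    have hbd := hC (xb + h) hmem
    have heval : taylorWithinEval u (M + 1) (Set.Icc xb b) xb (xb + h) = T h := by
      rw [taylor_within_apply]
      have hterm : ∀ j ∈ Finset.range (M + 2),
          ((j.factorial : ℝ)⁻¹ * (xb + h - xb) ^ j) •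
            iteratedDerivWithin j u (Set.Icc xb b) xb
          = ((j.factorial : ℝ)⁻¹ * h ^ j) • iteratedDeriv j u xb := by
        intro j _
        rw [iterWithin_eq hu hsub hxbb, add_sub_cancel_left]
      rw [Finset.sum_congr rfl hterm,
        taylor_sum_eq ha hk hapos ⟨hpxb, hxbq⟩ hu hODE M h, hT]
    rw [heval] at hbd
    simpa [add_sub_cancel_left] using hbd
  -- boundedness of c1
  have hc1O : c1 =O[𝓝 (0:ℝ)] (fun _ => (1:ℝ)) := by
    obtain ⟨U, hU, hcont⟩ := hc1cont
    have h0 : Filter.Tendsto c1 (𝓝 (0:ℝ)) (𝓝 (c1 0)) := by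
      have hw := hcont 0 (mem_of_mem_nhds hU)
      rwa [ContinuousWithinAt, nhdsWithin_eq_nhds.2 hU] at hw
    simpa using h0.isBigO_one ℝ
  have hpowC : ∀ N : ℕ, (fun h : ℝ => (h:ℂ) ^ N) =O[𝓝 (0:ℝ)] fun h : ℝ => h ^ N := by
    intro N
    apply Asymptotics.IsBigO.of_bound 1
    filter_upwards with h
    simp [norm_pow]
  -- split of EPoly0
  have hsplit : ∀ h : ℝ, EPoly0 a k xb (M + 1) h
      = EPoly0 a k xb M h + Ej0 a k (M + 1) xb * (h:ℂ) ^ (M + 1)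
        / (((M + 1).factorial : ℂ)) := by
    intro h
    rw [EPoly0, EPoly0, Finset.sum_Icc_succ_top (by omega : 2 ≤ M + 1)]
    ring
  have hdecomp : ∀ h : ℝ,
      c0 h * u xb + c1 h * u (xb + h) - (h:ℂ) * (lam0 * u xb + lam1 * deriv u xb)
      = u xb * (c0 h - (h:ℂ) * lam0 + c1 h * EPoly0 a k xb M h)
        + (u xb * Ej0 a k (M + 1) xb / (((M + 1).factorial : ℂ))) * (c1 h * (h:ℂ) ^ (M + 1))
        + deriv u xb * ((h:ℂ) * (c1 h * EPoly1 a k xb (M + 1) h - lam1))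
        + c1 h * (u (xb + h) - T h) := by
    intro h
    rw [hT]
    simp only [hsplit h]
    ring
  have L1 : (fun h : ℝ => u xb * (c0 h - (h:ℂ) * lam0 + c1 h * EPoly0 a k xb M h))
      =O[𝓝[>] (0:ℝ)] fun h : ℝ => h ^ (M + 1) :=
    (hc0.const_mul_left (u xb)).mono nhdsWithin_le_nhds
  have L2 : (fun h : ℝ => (u xb * Ej0 a k (M + 1) xb / (((M + 1).factorial : ℂ)))
        * (c1 h * (h:ℂ) ^ (M + 1)))
      =O[𝓝[>] (0:ℝ)] fun h : ℝ => h ^ (M + 1) := by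
    have := ((hc1O.mul (hpowC (M + 1))).const_mul_left
      (u xb * Ej0 a k (M + 1) xb / (((M + 1).factorial : ℂ)))).mono
      (nhdsWithin_le_nhds (s := Set.Ioi (0:ℝ)))
    simpa using this
  have L3 : (fun h : ℝ => deriv u xb * ((h:ℂ) * (c1 h * EPoly1 a k xb (M + 1) h - lam1)))
      =O[𝓝[>] (0:ℝ)] fun h : ℝ => h ^ (M + 1) := by
    have hid : (fun h : ℝ => (h:ℂ)) =O[𝓝 (0:ℝ)] fun h : ℝ => h := by
      apply Asymptotics.IsBigO.of_bound 1
      filter_upwards with h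
      simp
    have := ((hid.mul hc1).const_mul_left (deriv u xb)).mono
      (nhdsWithin_le_nhds (s := Set.Ioi (0:ℝ)))
    have hpow : (fun h : ℝ => h * h ^ M) = fun h : ℝ => h ^ (M + 1) := by
      funext h; ring
    rwa [hpow] at this
  have L4 : (fun h : ℝ => c1 h * (u (xb + h) - T h))
      =O[𝓝[>] (0:ℝ)] fun h : ℝ => h ^ (M + 1) := by
    have hR : (fun h : ℝ => u (xb + h) - T h) =O[𝓝[>] (0:ℝ)] fun h : ℝ => h ^ (M + 2) := by
      rw [Asymptotics.isBigO_iff]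
      refine ⟨|C|, ?_⟩
      filter_upwards [Ioo_mem_nhdsGT_of_mem
        (Set.mem_Ico.2 ⟨le_rfl, sub_pos.2 hxbb⟩)] with h hh
      calc ‖u (xb + h) - T h‖ ≤ C * h ^ (M + 2) := hrem h hh
        _ ≤ |C| * ‖h ^ (M + 2)‖ := by
            rw [Real.norm_eq_abs, abs_pow, abs_of_pos hh.1]
            exact mul_le_mul_of_nonneg_right (le_abs_self C) (pow_nonneg hh.1.le _)
    have hstep : (fun h : ℝ => h ^ (M + 2)) =O[𝓝[>] (0:ℝ)] fun h : ℝ => h ^ (M + 1) :=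
      ((isLittleO_pow_pow (by omega : M + 1 < M + 2)).isBigO).mono nhdsWithin_le_nhds
    have := (hc1O.mono (nhdsWithin_le_nhds (s := Set.Ioi (0:ℝ)))).mul (hR.trans hstep)
    simpa using this
  have total := ((L1.add L2).add L3).add L4
  have hfun : (fun h : ℝ => c0 h * u xb + c1 h * u (xb + h)
      - (h:ℂ) * (lam0 * u xb + lam1 * deriv u xb))
      = fun h : ℝ =>
        u xb * (c0 h - (h:ℂ) * lam0 + c1 h * EPoly0 a k xb M h)
        + (u xb * Ej0 a k (M + 1) xb / (((M + 1).factorial : ℂ))) * (c1 h * (h:ℂ) ^ (M + 1))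
        + deriv u xb * ((h:ℂ) * (c1 h * EPoly1 a k xb (M + 1) h - lam1))
        + c1 h * (u (xb + h) - T h) := funext hdecomp
  rw [hfun]
  exact total
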